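/- Assume Q ≥ 2. For every coarse configuration η with P̄(η) > 0, the first coarse-grained approximation H̄⁰(η) = E[H_N | F = η] is given explicitly by H̄⁰(η) = −(1/2) Σ_{k} Σ_{l ≠ k} J̄(k,l) η(k)η(l) − (1/2) Σ_k J̄(k,k) (η(k)² − Q) + h Σ_k η(k), where J̄(k,l) = Q^{−2} Σ_{x∈C_k, y∈C_l} J(x−y) for k ≠ l and J̄(k,k) = (Q(Q−1))^{−1} Σ_{x,y∈C_k, x≠y} J(x−y). -/

import Mathlib

open Finset

/-- Real spin value of a Boolean spin variable (`true ↦ +1`, `false ↦ −1`). -/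
def spin (b : Bool) : ℝ := if b then 1 else -1

/-- Integer spin value of a Boolean spin variable. -/
def spinZ (b : Bool) : ℤ := if b then 1 else -1

/-- The microscopic lattice site of the coarse cell `C_k` with offset `a`, i.e. the point
`q·k + a` of `Λ = (ℤ/nℤ)ᵈ` with `n = m·q`. -/
def cellPoint (d m q : ℕ) (k : Fin d → ZMod m) (a : Fin d → Fin q) :
    Fin d → ZMod (m * q) :=
  fun i => ((q * (k i).val + (a i).val : ℕ) : ZMod (m * q))

/-- The blocking map `F`: the coarse spin `η(k) = Σ_{x ∈ C_k} σ(x)`. -/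
def blockF (d m q : ℕ) (σ : (Fin d → ZMod (m * q)) → Bool)
    (k : Fin d → ZMod m) : ℤ :=
  ∑ a : Fin d → Fin q, spinZ (σ (cellPoint d m q k a))

/-- The fiber `{σ : F(σ) = η}` of the blocking map over a coarse configuration `η`. -/
def fiber (d m q : ℕ) [NeZero m] [NeZero (m * q)]
    (η : (Fin d → ZMod m) → ℤ) : Finset ((Fin d → ZMod (m * q)) → Bool) :=
  Finset.univ.filter (fun σ => blockF d m q σ = η)

/-- The microscopic Hamiltonian
`H_N(σ) = −(1/2) Σ_x Σ_{y ≠ x} J(x−y) σ(x)σ(y) + h Σ_x σ(x)` on `Λ = (ℤ/nℤ)ᵈ`. -/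
noncomputable def ham (d n : ℕ) [NeZero n] (J : (Fin d → ZMod n) → ℝ) (h : ℝ)
    (σ : (Fin d → ZMod n) → Bool) : ℝ :=
  -(1 / 2) * ∑ x : Fin d → ZMod n, ∑ y ∈ Finset.univ.filter (fun y => y ≠ x),
      J (x - y) * (spin (σ x) * spin (σ y))
    + h * ∑ x : Fin d → ZMod n, spin (σ x)

lemma spin_eq_cast (b : Bool) : spin b = (spinZ b : ℝ) := by cases b <;> simp [spin, spinZ]
lemma spinZ_mul_self (b : Bool) : spinZ b * spinZ b = 1 := by cases b <;> simp [spinZ]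

variable {A : Type*} [Fintype A] [DecidableEq A]

/-- configs on a cell with prescribed spin sum -/
def Tset (A : Type*) [Fintype A] [DecidableEq A] (s : ℤ) : Finset (A → Bool) :=
  Finset.univ.filter (fun τ => ∑ a, spinZ (τ a) = s)

lemma Tset_sum_perm (s : ℤ) (π : Equiv.Perm A) (f : (A → Bool) → ℤ) :
    ∑ τ ∈ Tset A s, f (τ ∘ π) = ∑ τ ∈ Tset A s, f τ := by
  refine Finset.sum_nbij' (fun τ => τ ∘ π) (fun τ => τ ∘ π.symm) ?_ ?_ ?_ ?_ ?_
  · intro τ hτ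
    simp only [Tset, mem_filter, mem_univ, true_and] at hτ ⊢
    rw [← hτ]
    exact Fintype.sum_equiv π _ _ (fun a => rfl)
  · intro τ hτ
    simp only [Tset, mem_filter, mem_univ, true_and] at hτ ⊢
    rw [← hτ]
    exact Fintype.sum_equiv π.symm _ _ (fun a => rfl)
  · intro τ _; funext a; simp
  · intro τ _; funext a; simp
  · intro τ _; rfl

lemma Tset_sum_mem (s : ℤ) {τ : A → Bool} (hτ : τ ∈ Tset A s) : ∑ a, spinZ (τ a) = s := by
  simpa [Tset] using hτ

lemma sum_spin_const (s : ℤ) (a a' : A) :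
    ∑ τ ∈ Tset A s, spinZ (τ a) = ∑ τ ∈ Tset A s, spinZ (τ a') := by
  have := Tset_sum_perm (A := A) s (Equiv.swap a a') (fun τ => spinZ (τ a))
  simpa using this.symm

lemma sum_spin_single (s : ℤ) (a : A) :
    (Fintype.card A : ℤ) * ∑ τ ∈ Tset A s, spinZ (τ a) = s * (Tset A s).card := by
  have h1 : ∑ a' : A, ∑ τ ∈ Tset A s, spinZ (τ a') = (Fintype.card A : ℤ) * ∑ τ ∈ Tset A s, spinZ (τ a) := by
    rw [Finset.sum_congr rfl (fun a' _ => sum_spin_const s a' a)]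
    simp [mul_comm, Finset.card_univ]
  rw [← h1, Finset.sum_comm]
  rw [Finset.sum_congr rfl (fun τ hτ => Tset_sum_mem s hτ)]
  simp [mul_comm]

lemma exists_perm_pair {a b a' b' : A} (h2 : a' ≠ b') :
    ∃ π : Equiv.Perm A, π a' = a ∧ π b' = b → True := ⟨1, by simp⟩

lemma exists_perm_pair' {a b a' b' : A} (h1 : a ≠ b) (h2 : a' ≠ b') :
    ∃ π : Equiv.Perm A, π a' = a ∧ π b' = b := by
  refine ⟨(Equiv.swap a' a).trans (Equiv.swap (Equiv.swap a' a b') b), ?_, ?_⟩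
  · have hc : Equiv.swap a' a b' ≠ a := by
      rcases eq_or_ne a' a with rfl | hne
      · simpa [Equiv.swap_self] using h2.symm
      · rcases eq_or_ne b' a with rfl | hb
        · rw [Equiv.swap_apply_right]; exact hne
        · rw [Equiv.swap_apply_of_ne_of_ne h2.symm hb]; exact hb
    simp only [Equiv.trans_apply, Equiv.swap_apply_left]
    exact Equiv.swap_apply_of_ne_of_ne (Ne.symm hc) h1
  · simp only [Equiv.trans_apply, Equiv.swap_apply_left]

lemma sum_spin_pair_const (s : ℤ) {a b a' b' : A} (h1 : a ≠ b) (h2 : a' ≠ b') :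
    ∑ τ ∈ Tset A s, spinZ (τ a') * spinZ (τ b') = ∑ τ ∈ Tset A s, spinZ (τ a) * spinZ (τ b) := by
  obtain ⟨π, hπa, hπb⟩ := exists_perm_pair' (A := A) h1 h2
  have := Tset_sum_perm (A := A) s π (fun τ => spinZ (τ a') * spinZ (τ b'))
  calc ∑ τ ∈ Tset A s, spinZ (τ a') * spinZ (τ b')
      = ∑ τ ∈ Tset A s, spinZ ((τ ∘ π) a') * spinZ ((τ ∘ π) b') := this.symm
    _ = ∑ τ ∈ Tset A s, spinZ (τ a) * spinZ (τ b) := by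
        refine Finset.sum_congr rfl fun τ _ => ?_
        simp [Function.comp, hπa, hπb]

lemma sum_spin_pair (s : ℤ) {a b : A} (hab : a ≠ b) :
    (Fintype.card A : ℤ) * ((Fintype.card A : ℤ) - 1) *
      ∑ τ ∈ Tset A s, spinZ (τ a) * spinZ (τ b)
      = (s ^ 2 - Fintype.card A) * (Tset A s).card := by
  have inner : ∀ τ ∈ Tset A s,
      ∑ a' : A, ∑ b' ∈ Finset.univ.erase a', spinZ (τ a') * spinZ (τ b')
        = s ^ 2 - Fintype.card A := by
    intro τ hτ
    have hs := Tset_sum_mem s hτ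
    have h1 : ∀ a' : A, ∑ b' ∈ Finset.univ.erase a', spinZ (τ a') * spinZ (τ b')
        = spinZ (τ a') * (s - spinZ (τ a')) := fun a' => by
      rw [← Finset.mul_sum, Finset.sum_erase_eq_sub (Finset.mem_univ a'), hs]
    rw [Finset.sum_congr rfl fun a' _ => h1 a']
    have h2 : ∑ a' : A, spinZ (τ a') * (s - spinZ (τ a'))
        = (∑ a' : A, spinZ (τ a')) * s - ∑ a' : A, spinZ (τ a') * spinZ (τ a') := by
      rw [Finset.sum_mul, ← Finset.sum_sub_distrib]
      exact Finset.sum_congr rfl fun a' _ => by ring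
    rw [h2, hs]
    simp only [spinZ_mul_self, Finset.sum_const, Finset.card_univ, nsmul_eq_mul, mul_one]
    ring
  have key : ∑ a' : A, ∑ b' ∈ Finset.univ.erase a', ∑ τ ∈ Tset A s, spinZ (τ a') * spinZ (τ b')
      = (s ^ 2 - Fintype.card A) * (Tset A s).card := by
    rw [Finset.sum_congr rfl (fun a' _ => Finset.sum_comm), Finset.sum_comm,
      Finset.sum_congr rfl inner]
    simp [mul_comm]
    ring
  rw [← key, Finset.sum_congr rfl (fun a' _ => Finset.sum_congr rfl
      (fun b' hb' => sum_spin_pair_const s hab (Ne.symm (Finset.ne_of_mem_erase hb'))))]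
  simp only [Finset.sum_const, Finset.card_erase_of_mem (Finset.mem_univ _), Finset.card_univ,
    nsmul_eq_mul]
  rw [Nat.cast_sub (Fintype.card_pos_iff.mpr ⟨a⟩)]
  push_cast
  ring

lemma piFinset_sum_eval {ι α : Type*} [Fintype ι] [DecidableEq ι] [DecidableEq α]
    (t : ι → Finset α) (k : ι) (g : α → ℝ) :
    ∑ T ∈ Fintype.piFinset t, g (T k)
      = (∏ i ∈ Finset.univ.erase k, ((t i).card : ℝ)) * ∑ τ ∈ t k, g τ := by
  have h := Finset.prod_univ_sum t (fun i τ => if i = k then g τ else 1)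
  have hL : (∏ i : ι, ∑ τ ∈ t i, (if i = k then g τ else 1))
      = (∑ τ ∈ t k, g τ) * ∏ i ∈ Finset.univ.erase k, ((t i).card : ℝ) := by
    rw [← Finset.mul_prod_erase Finset.univ _ (Finset.mem_univ k)]
    simp only [if_pos rfl]
    congr 1
    refine Finset.prod_congr rfl fun i hi => ?_
    rw [Finset.sum_congr rfl fun τ _ => if_neg (Finset.ne_of_mem_erase hi)]
    simp
  have hR : ∀ T : ι → α, (∏ i : ι, (if i = k then g (T i) else 1)) = g (T k) := fun T => by
    rw [Finset.prod_eq_single k (fun i _ hik => if_neg hik) (by simp)]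
    simp
  rw [hL] at h
  rw [← Finset.sum_congr rfl (fun T _ => hR T), ← h, mul_comm]

lemma piFinset_sum_eval₂ {ι α : Type*} [Fintype ι] [DecidableEq ι] [DecidableEq α]
    (t : ι → Finset α) {k l : ι} (hkl : l ≠ k) (g g' : α → ℝ) :
    ∑ T ∈ Fintype.piFinset t, g (T k) * g' (T l)
      = (∏ i ∈ (Finset.univ.erase k).erase l, ((t i).card : ℝ)) *
          ((∑ τ ∈ t k, g τ) * (∑ τ ∈ t l, g' τ)) := by
  have hlk : l ∈ Finset.univ.erase k := Finset.mem_erase.mpr ⟨hkl, Finset.mem_univ l⟩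
  have h := Finset.prod_univ_sum t (fun i τ => if i = k then g τ else if i = l then g' τ else 1)
  have hL : (∏ i : ι, ∑ τ ∈ t i, (if i = k then g τ else if i = l then g' τ else 1))
      = (∑ τ ∈ t k, g τ) * ((∑ τ ∈ t l, g' τ) *
          ∏ i ∈ (Finset.univ.erase k).erase l, ((t i).card : ℝ)) := by
    rw [← Finset.mul_prod_erase Finset.univ _ (Finset.mem_univ k),
      ← Finset.mul_prod_erase _ _ hlk]
    simp only [if_pos rfl]
    congr 1
    congr 1
    · rw [Finset.sum_congr rfl fun τ _ => if_neg hkl]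
      simp
    · refine Finset.prod_congr rfl fun i hi => ?_
      have hik : i ≠ k := Finset.ne_of_mem_erase (Finset.mem_of_mem_erase hi)
      have hil : i ≠ l := Finset.ne_of_mem_erase hi
      rw [Finset.sum_congr rfl fun τ _ => by rw [if_neg hik, if_neg hil]]
      simp
  have hR : ∀ T : ι → α,
      (∏ i : ι, (if i = k then g (T i) else if i = l then g' (T i) else 1))
        = g (T k) * g' (T l) := fun T => by
    rw [← Finset.mul_prod_erase Finset.univ _ (Finset.mem_univ k),
      ← Finset.mul_prod_erase _ _ hlk, if_pos rfl, if_neg hkl, if_pos rfl]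
    rw [Finset.prod_congr rfl (fun i hi => by
      rw [if_neg (Finset.ne_of_mem_erase (Finset.mem_of_mem_erase hi)),
        if_neg (Finset.ne_of_mem_erase hi)])]
    simp [mul_assoc]
  rw [hL] at h
  rw [← Finset.sum_congr rfl (fun T _ => hR T), ← h]
  ring

lemma cellPoint_bijective (d m q : ℕ) [NeZero m] [NeZero (m * q)] (hq : 0 < q) :
    Function.Bijective
      (fun p : (Fin d → ZMod m) × (Fin d → Fin q) => cellPoint d m q p.1 p.2) := by
  have hm : 0 < m := Nat.pos_of_ne_zero (NeZero.ne m)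
  rw [Fintype.bijective_iff_injective_and_card]
  constructor
  · rintro ⟨k, a⟩ ⟨k', a'⟩ hp
    simp only [cellPoint] at hp
    have hval : ∀ i, q * (k i).val + (a i).val = q * (k' i).val + (a' i).val := by
      intro i
      have h1 : q * (k i).val + (a i).val < m * q := by
        have := (k i).val_lt
        have := (a i).2
        calc q * (k i).val + (a i).val < q * (k i).val + q := by omega
          _ = q * ((k i).val + 1) := by ring
          _ ≤ q * m := Nat.mul_le_mul_left q (by omega)
          _ = m * q := Nat.mul_comm q m
      have h2 : q * (k' i).val + (a' i).val < m * q := by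
        have := (k' i).val_lt
        have := (a' i).2
        calc q * (k' i).val + (a' i).val < q * (k' i).val + q := by omega
          _ = q * ((k' i).val + 1) := by ring
          _ ≤ q * m := Nat.mul_le_mul_left q (by omega)
          _ = m * q := Nat.mul_comm q m
      have h0 : ((q * (k i).val + (a i).val : ℕ) : ZMod (m * q))
          = ((q * (k' i).val + (a' i).val : ℕ) : ZMod (m * q)) := congrFun hp i
      have := congrArg ZMod.val h0
      rwa [ZMod.val_natCast_of_lt h1, ZMod.val_natCast_of_lt h2] at this
    have hk : k = k' := by
      funext i
      have h := hval i
      have ha := (a i).2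
      have ha' := (a' i).2
      have : (k i).val = (k' i).val := by
        have h1 : (q * (k i).val + (a i).val) / q = (k i).val := by
          rw [Nat.add_div_eq_of_add_mod_lt ?_] <;>
            simp [Nat.mul_div_cancel_left _ hq, Nat.div_eq_of_lt ha, Nat.mod_eq_of_lt ha,
              Nat.mul_mod_right]
        have h2 : (q * (k' i).val + (a' i).val) / q = (k' i).val := by
          rw [Nat.add_div_eq_of_add_mod_lt ?_] <;>
            simp [Nat.mul_div_cancel_left _ hq, Nat.div_eq_of_lt ha', Nat.mod_eq_of_lt ha',
              Nat.mul_mod_right]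
        rw [← h1, ← h2, h]
      exact ZMod.val_injective _ this
    have ha : a = a' := by
      funext i
      have h := hval i
      rw [congrFun hk i] at h
      exact Fin.ext (by omega)
    exact Prod.ext hk ha
  · rw [Fintype.card_prod, Fintype.card_fun, Fintype.card_fun, Fintype.card_fun,
      ZMod.card, ZMod.card, Fintype.card_fin, Fintype.card_fin, ← mul_pow]

set_option maxHeartbeats 2000000 in
/-- **Explicit form of the first coarse-grained Hamiltonian:** for `Q ≥ 2` and every coarse
configuration `η` with `P̄(η) > 0`,
`H̄⁰(η) = E[H_N | F = η]
 = −(1/2) Σ_k Σ_{l≠k} J̄(k,l) η(k)η(l) − (1/2) Σ_k J̄(k,k)(η(k)² − Q) + h Σ_k η(k)`. -/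
theorem first_coarse_hamiltonian_explicit
    (d m q : ℕ) [NeZero m] [NeZero (m * q)] (hd : 1 ≤ d) (hm : 1 ≤ m)
    (hQ : 2 ≤ q ^ d)
    (J : (Fin d → ZMod (m * q)) → ℝ) (hJeven : ∀ x, J (-x) = J x) (hJ0 : J 0 = 0)
    (h : ℝ)
    (η : (Fin d → ZMod m) → ℤ) (hη : (fiber d m q η).Nonempty)
    (Jbar : (Fin d → ZMod m) → (Fin d → ZMod m) → ℝ)
    (hJbar : ∀ k l, k ≠ l → Jbar k l =
      (∑ a : Fin d → Fin q, ∑ b : Fin d → Fin q,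
          J (cellPoint d m q k a - cellPoint d m q l b)) / ((q : ℝ) ^ d) ^ 2)
    (hJbarDiag : ∀ k, Jbar k k =
      (∑ a : Fin d → Fin q, ∑ b ∈ Finset.univ.filter (fun b => b ≠ a),
          J (cellPoint d m q k a - cellPoint d m q k b))
        / (((q : ℝ) ^ d) * ((q : ℝ) ^ d - 1))) :
    (∑ σ ∈ fiber d m q η, ham d (m * q) J h σ) / ((fiber d m q η).card : ℝ)
      = -(1 / 2) * (∑ k : Fin d → ZMod m, ∑ l ∈ Finset.univ.filter (fun l => l ≠ k),
            Jbar k l * ((η k : ℝ) * (η l : ℝ)))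
        - (1 / 2) * (∑ k : Fin d → ZMod m, Jbar k k * ((η k : ℝ) ^ 2 - (q : ℝ) ^ d))
        + h * ∑ k : Fin d → ZMod m, (η k : ℝ) := by
  classical
  have hq0 : 0 < q := by
    rcases Nat.eq_zero_or_pos q with rfl | hpos
    · rw [Nat.zero_pow (by omega)] at hQ; omega
    · exact hpos
  have hQR : (2 : ℝ) ≤ (q : ℝ) ^ d := by exact_mod_cast hQ
  set Q : ℝ := (q : ℝ) ^ d with hQdef
  have hQne : Q ≠ 0 := by intro h0; rw [h0] at hQR; norm_num at hQR
  have hQ1ne : Q - 1 ≠ 0 := by intro h0; nlinarith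
  have cardA : Fintype.card (Fin d → Fin q) = q ^ d := by
    rw [Fintype.card_fun, Fintype.card_fin, Fintype.card_fin]
  have hcardA_R : ((Fintype.card (Fin d → Fin q) : ℤ) : ℝ) = Q := by
    rw [cardA]; push_cast; rfl
  set e := Equiv.ofBijective _ (cellPoint_bijective d m q hq0) with he
  set t : (Fin d → ZMod m) → Finset ((Fin d → Fin q) → Bool) :=
    fun k => Tset _ (η k) with ht
  set S := Fintype.piFinset t with hS
  set cfg : ((Fin d → ZMod m) → (Fin d → Fin q) → Bool) → ((Fin d → ZMod (m * q)) → Bool) :=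
    fun T x => T (e.symm x).1 (e.symm x).2 with hcfg
  have hcell_e : ∀ k a, cellPoint d m q k a = e (k, a) := fun k a => rfl
  have hcfg_e : ∀ T (p : (Fin d → ZMod m) × (Fin d → Fin q)), cfg T (e p) = T p.1 p.2 := by
    intro T p; simp [hcfg]
  have hcfg_cell : ∀ T k a, cfg T (cellPoint d m q k a) = T k a := by
    intro T k a; rw [hcell_e]; exact hcfg_e T (k, a)
  -- reindex the fiber
  have hmem1 : ∀ σ ∈ fiber d m q η, (fun k a => σ (cellPoint d m q k a)) ∈ S := by
    intro σ hσ
    rw [hS, Fintype.mem_piFinset]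
    intro k
    simp only [ht, Tset, mem_filter, mem_univ, true_and]
    have hbf : blockF d m q σ = η := by simpa [fiber] using hσ
    exact congrFun hbf k
  have hmem2 : ∀ T ∈ S, cfg T ∈ fiber d m q η := by
    intro T hT
    simp only [fiber, mem_filter, mem_univ, true_and]
    funext k
    rw [hS, Fintype.mem_piFinset] at hT
    have hTk := hT k
    simp only [ht, Tset, mem_filter, mem_univ, true_and] at hTk
    calc blockF d m q (cfg T) k
        = ∑ a, spinZ (T k a) :=
          Finset.sum_congr rfl fun a _ => congrArg spinZ (hcfg_cell T k a)
      _ = η k := hTk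
  have hleft : ∀ σ ∈ fiber d m q η, cfg (fun k a => σ (cellPoint d m q k a)) = σ := by
    intro σ _
    funext x
    show σ (cellPoint d m q (e.symm x).1 (e.symm x).2) = σ x
    have hx : e ((e.symm x).1, (e.symm x).2) = x := by
      rw [Prod.mk.eta]; exact e.apply_symm_apply x
    rw [hcell_e]
    exact congrArg σ hx
  have hright : ∀ T ∈ S, (fun k a => cfg T (cellPoint d m q k a)) = T := by
    intro T _
    funext k a
    rw [hcfg_cell]
  have hsum : ∀ f : ((Fin d → ZMod (m * q)) → Bool) → ℝ,
      ∑ σ ∈ fiber d m q η, f σ = ∑ T ∈ S, f (cfg T) := by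
    intro f
    exact Finset.sum_nbij' (fun σ => fun k a => σ (cellPoint d m q k a)) cfg
      hmem1 hmem2 hleft hright
      (fun σ hσ => (congrArg f (hleft σ hσ)).symm)
  have hcard : (fiber d m q η).card = S.card :=
    Finset.card_nbij' (fun σ => fun k a => σ (cellPoint d m q k a)) cfg
      hmem1 hmem2 hleft hright
  set P : ℝ := ∏ k, ((t k).card : ℝ) with hP
  have hScard : (S.card : ℝ) = P := by
    rw [hS, hP, Fintype.card_piFinset]
    push_cast
    rfl
  have hfib_pos : 0 < (fiber d m q η).card := Finset.card_pos.mpr hη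
  have hPcard : ((fiber d m q η).card : ℝ) = P := by rw [hcard, hScard]
  have hP_pos : 0 < P := by rw [← hPcard]; exact_mod_cast hfib_pos
  have htk_ne : ∀ k, ((t k).card : ℝ) ≠ 0 := by
    intro k h0
    have : P = 0 := Finset.prod_eq_zero (Finset.mem_univ k) h0
    exact hP_pos.ne' this
  -- cell averages
  have cor1 : ∀ (k : Fin d → ZMod m) (a : Fin d → Fin q),
      ∑ τ ∈ t k, spin (τ a) = (η k : ℝ) * ((t k).card : ℝ) / Q := by
    intro k a
    have hz := sum_spin_single (A := Fin d → Fin q) (η k) a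
    have hzr := congrArg (fun z : ℤ => (z : ℝ)) hz
    push_cast at hzr
    rw [eq_div_iff hQne]
    calc (∑ τ ∈ t k, spin (τ a)) * Q
        = ((Fintype.card (Fin d → Fin q) : ℤ) : ℝ) *
            ∑ τ ∈ Tset (Fin d → Fin q) (η k), (spinZ (τ a) : ℝ) := by
          rw [hcardA_R]
          rw [mul_comm]
          congr 1
          exact Finset.sum_congr rfl fun τ _ => spin_eq_cast (τ a)
      _ = (η k : ℝ) * ((t k).card : ℝ) := by
          push_cast
          convert hzr using 2
  have cor2 : ∀ (k : Fin d → ZMod m) {a b : Fin d → Fin q}, a ≠ b →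
      ∑ τ ∈ t k, spin (τ a) * spin (τ b)
        = ((η k : ℝ) ^ 2 - Q) * ((t k).card : ℝ) / (Q * (Q - 1)) := by
    intro k a b hab
    have hz := sum_spin_pair (A := Fin d → Fin q) (η k) hab
    have hzr := congrArg (fun z : ℤ => (z : ℝ)) hz
    push_cast at hzr
    rw [eq_div_iff (mul_ne_zero hQne hQ1ne)]
    calc (∑ τ ∈ t k, spin (τ a) * spin (τ b)) * (Q * (Q - 1))
        = ((Fintype.card (Fin d → Fin q) : ℤ) : ℝ) * (((Fintype.card (Fin d → Fin q) : ℤ) : ℝ) - 1) *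
            ∑ τ ∈ Tset (Fin d → Fin q) (η k), (spinZ (τ a) : ℝ) * (spinZ (τ b) : ℝ) := by
          rw [hcardA_R]
          rw [mul_comm]
          congr 1
          exact Finset.sum_congr rfl fun τ _ => by rw [spin_eq_cast, spin_eq_cast]
      _ = ((η k : ℝ) ^ 2 - Q) * ((t k).card : ℝ) := by
          rw [← hcardA_R]
          push_cast
          convert hzr using 2
  -- sums over the whole fiber product
  have hV : ∀ (k : Fin d → ZMod m) (a : Fin d → Fin q),
      ∑ T ∈ S, spin (T k a) = P * (η k : ℝ) / Q := by
    intro k a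
    rw [hS, piFinset_sum_eval t k (fun τ => spin (τ a)), cor1 k a,
      hP, ← Finset.mul_prod_erase Finset.univ _ (Finset.mem_univ k)]
    ring
  have hWoff : ∀ (k l : Fin d → ZMod m) (a b : Fin d → Fin q), l ≠ k →
      ∑ T ∈ S, spin (T k a) * spin (T l b)
        = P * ((η k : ℝ) * (η l : ℝ)) / Q ^ 2 := by
    intro k l a b hlk
    rw [hS, piFinset_sum_eval₂ t hlk (fun τ => spin (τ a)) (fun τ => spin (τ b)),
      cor1 k a, cor1 l b,
      hP, ← Finset.mul_prod_erase Finset.univ _ (Finset.mem_univ k),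
      ← Finset.mul_prod_erase _ _ (Finset.mem_erase.mpr ⟨hlk, Finset.mem_univ l⟩)]
    ring
  have hWdiag : ∀ (k : Fin d → ZMod m) (a b : Fin d → Fin q), b ≠ a →
      ∑ T ∈ S, spin (T k a) * spin (T k b)
        = P * ((η k : ℝ) ^ 2 - Q) / (Q * (Q - 1)) := by
    intro k a b hba
    rw [hS, piFinset_sum_eval t k (fun τ => spin (τ a) * spin (τ b)),
      cor2 k (Ne.symm hba),
      hP, ← Finset.mul_prod_erase Finset.univ _ (Finset.mem_univ k)]
    ring
  -- Hamiltonian in cell coordinates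
  have hham : ∀ T, ham d (m * q) J h (cfg T)
      = -(1/2) * (∑ k, ∑ a, ∑ p ∈ Finset.univ.erase ((k, a) : (Fin d → ZMod m) × (Fin d → Fin q)),
            J (cellPoint d m q k a - cellPoint d m q p.1 p.2) * (spin (T k a) * spin (T p.1 p.2)))
        + h * ∑ k, ∑ a, spin (T k a) := by
    intro T
    rw [ham]
    congr 1
    · congr 1
      rw [← Equiv.sum_comp e (fun x => ∑ y ∈ Finset.univ.filter (fun y => y ≠ x),
          J (x - y) * (spin (cfg T x) * spin (cfg T y))), Fintype.sum_prod_type]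
      refine Finset.sum_congr rfl fun k _ => Finset.sum_congr rfl fun a _ => ?_
      have hfe : (Finset.univ.filter (fun y => y ≠ e (k, a)))
          = (Finset.univ.erase ((k, a))).map e.toEmbedding := by
        rw [Finset.filter_ne', Finset.map_erase, Finset.map_univ_equiv]
        simp only [Equiv.coe_toEmbedding]
      rw [hfe, Finset.sum_map]
      refine Finset.sum_congr rfl fun p _ => ?_
      simp only [Equiv.coe_toEmbedding]
      rw [hcfg_e, hcfg_e]
      rfl
    · congr 1
      rw [← Equiv.sum_comp e (fun x => spin (cfg T x)), Fintype.sum_prod_type]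
      exact Finset.sum_congr rfl fun k _ => Finset.sum_congr rfl fun a _ => by rw [hcfg_e]
  -- total sum over the fiber
  have htotal : ∑ σ ∈ fiber d m q η, ham d (m * q) J h σ
      = -(1/2) * (∑ k, ∑ a, ∑ p ∈ Finset.univ.erase ((k, a) : (Fin d → ZMod m) × (Fin d → Fin q)),
            J (cellPoint d m q k a - cellPoint d m q p.1 p.2) *
              ∑ T ∈ S, spin (T k a) * spin (T p.1 p.2))
        + h * ∑ k, ∑ a, ∑ T ∈ S, spin (T k a) := by
    rw [hsum _, Finset.sum_congr rfl fun T _ => hham T,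
      Finset.sum_add_distrib, ← Finset.mul_sum, ← Finset.mul_sum]
    congr 1
    · congr 1
      rw [Finset.sum_comm]
      refine Finset.sum_congr rfl fun k _ => ?_
      rw [Finset.sum_comm]
      refine Finset.sum_congr rfl fun a _ => ?_
      rw [Finset.sum_comm]
      exact Finset.sum_congr rfl fun p _ => (Finset.mul_sum _ _ _).symm
    · congr 1
      rw [Finset.sum_comm]
      exact Finset.sum_congr rfl fun k _ => Finset.sum_comm
  -- split the erased product sum
  have hsplit : ∀ (f : (Fin d → ZMod m) × (Fin d → Fin q) → ℝ) (k : Fin d → ZMod m)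
      (a : Fin d → Fin q),
      ∑ p ∈ Finset.univ.erase ((k, a)), f p
        = (∑ l ∈ Finset.univ.erase k, ∑ b, f (l, b)) + ∑ b ∈ Finset.univ.erase a, f (k, b) := by
    intro f k a
    rw [Finset.sum_erase_eq_sub (Finset.mem_univ ((k, a))), Fintype.sum_prod_type,
      Finset.sum_erase_eq_sub (Finset.mem_univ k), Finset.sum_erase_eq_sub (Finset.mem_univ a)]
    ring
  -- the double-site term, cell by cell
  have hDk : ∀ k : Fin d → ZMod m,
      ∑ a, ∑ p ∈ Finset.univ.erase ((k, a) : (Fin d → ZMod m) × (Fin d → Fin q)),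
          J (cellPoint d m q k a - cellPoint d m q p.1 p.2) *
            ∑ T ∈ S, spin (T k a) * spin (T p.1 p.2)
        = P * ((∑ l ∈ Finset.univ.erase k, Jbar k l * ((η k : ℝ) * (η l : ℝ)))
            + Jbar k k * ((η k : ℝ) ^ 2 - Q)) := by
    intro k
    have step : ∀ a : Fin d → Fin q,
        ∑ p ∈ Finset.univ.erase ((k, a) : (Fin d → ZMod m) × (Fin d → Fin q)),
            J (cellPoint d m q k a - cellPoint d m q p.1 p.2) *
              ∑ T ∈ S, spin (T k a) * spin (T p.1 p.2)
          = (∑ l ∈ Finset.univ.erase k, ∑ b, J (cellPoint d m q k a - cellPoint d m q l b)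
                * (P * ((η k : ℝ) * (η l : ℝ)) / Q ^ 2))
            + ∑ b ∈ Finset.univ.erase a, J (cellPoint d m q k a - cellPoint d m q k b)
                * (P * ((η k : ℝ) ^ 2 - Q) / (Q * (Q - 1))) := by
      intro a
      rw [hsplit]
      congr 1
      · exact Finset.sum_congr rfl fun l hl => Finset.sum_congr rfl fun b _ => by
          rw [hWoff k l a b (Finset.ne_of_mem_erase hl)]
      · exact Finset.sum_congr rfl fun b hb => by
          rw [hWdiag k a b (Finset.ne_of_mem_erase hb)]
    rw [Finset.sum_congr rfl fun a _ => step a, Finset.sum_add_distrib, mul_add]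
    congr 1
    · -- off-diagonal
      rw [Finset.sum_comm, Finset.mul_sum]
      refine Finset.sum_congr rfl fun l hl => ?_
      have hkl : k ≠ l := Ne.symm (Finset.ne_of_mem_erase hl)
      have pull : ∑ a, ∑ b, J (cellPoint d m q k a - cellPoint d m q l b)
            * (P * ((η k : ℝ) * (η l : ℝ)) / Q ^ 2)
          = (∑ a : Fin d → Fin q, ∑ b : Fin d → Fin q,
              J (cellPoint d m q k a - cellPoint d m q l b))
            * (P * ((η k : ℝ) * (η l : ℝ)) / Q ^ 2) := by
        rw [Finset.sum_mul]
        exact Finset.sum_congr rfl fun a _ => by rw [Finset.sum_mul]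
      have hJ' : (∑ a : Fin d → Fin q, ∑ b : Fin d → Fin q,
            J (cellPoint d m q k a - cellPoint d m q l b)) = Jbar k l * Q ^ 2 := by
        rw [hJbar k l hkl]
        field_simp
      rw [pull, hJ']
      field_simp
    · -- diagonal
      have pull : ∑ a, ∑ b ∈ Finset.univ.erase a,
            J (cellPoint d m q k a - cellPoint d m q k b) * (P * ((η k : ℝ) ^ 2 - Q) / (Q * (Q - 1)))
          = (∑ a : Fin d → Fin q, ∑ b ∈ Finset.univ.erase a,
              J (cellPoint d m q k a - cellPoint d m q k b))
            * (P * ((η k : ℝ) ^ 2 - Q) / (Q * (Q - 1))) := by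
        rw [Finset.sum_mul]
        exact Finset.sum_congr rfl fun a _ => by rw [Finset.sum_mul]
      have hJ' : (∑ a : Fin d → Fin q, ∑ b ∈ Finset.univ.erase a,
            J (cellPoint d m q k a - cellPoint d m q k b)) = Jbar k k * (Q * (Q - 1)) := by
        have := hJbarDiag k
        simp only [Finset.filter_ne'] at this
        rw [this]
        field_simp
      rw [pull, hJ']
      field_simp
  -- the single-site term
  have hHT : ∑ k, ∑ a : Fin d → Fin q, ∑ T ∈ S, spin (T k a) = P * ∑ k, (η k : ℝ) := by
    rw [Finset.mul_sum]
    refine Finset.sum_congr rfl fun k _ => ?_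
    rw [Finset.sum_congr rfl fun a _ => hV k a, Finset.sum_const, Finset.card_univ,
      nsmul_eq_mul, cardA]
    push_cast
    rw [← hQdef]
    field_simp
  -- conclusion
  rw [htotal, hPcard, Finset.sum_congr rfl fun k _ => hDk k, hHT]
  simp only [Finset.filter_ne']
  rw [← Finset.mul_sum, Finset.sum_add_distrib]
  field_simp
  ring
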